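/- For star bodies L_1, ..., L_n in R^n and 1 ≤ m ≤ n, the dual Aleksandrov–Fenchel inequality holds: Ṽ(L_1,...,L_n)^m ≤ ∏_{j=1}^m Ṽ(L_j,...,L_j, L_{m+1},...,L_n), with equality if and only if L_1, ..., L_m are dilates of one another. -/

import Mathlib

open MeasureTheory Metric
open scoped RealInnerProductSpace

noncomputable section

/-- Euclidean space ℝⁿ. -/
abbrev Euc (n : ℕ) := EuclideanSpace ℝ (Fin n)

/-- The unit sphere S^{n-1} ⊂ ℝⁿ. -/
abbrev Sph (n : ℕ) := Metric.sphere (0 : Euc n) 1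

/-- Spherical Lebesgue measure on S^{n-1}. -/
def sphMeasure (n : ℕ) [NeZero n] : Measure (Sph n) := volume.toSphere

/-- A star body (with respect to the origin) in ℝⁿ, described by its continuous
positive radial function on the unit sphere. -/
structure StarBody (n : ℕ) where
  radial : C(Sph n, ℝ)
  pos : ∀ u, 0 < radial u

/-- Two star bodies are dilates if their radial functions are proportional. -/
def Dilates (n : ℕ) (K L : StarBody n) : Prop :=
  ∃ c : ℝ, 0 < c ∧ ∀ u, K.radial u = c * L.radial u

/-- The dual mixed volume Ṽ(L_1,…,L_n) = (1/n) ∫ ρ(L_1,u)⋯ρ(L_n,u) du. -/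
def dualMixedVol (n : ℕ) [NeZero n] (L : Fin n → StarBody n) : ℝ :=
  (1 / n : ℝ) * ∫ u, ∏ i, (L i).radial u ∂(sphMeasure n)

section Helpers

open Pointwise

variable {n : ℕ} [NeZero n]


instance sph_nonempty : Nonempty (Sph n) := by
  refine ⟨⟨EuclideanSpace.single ⟨0, Nat.pos_of_ne_zero (NeZero.ne n)⟩ (1 : ℝ), ?_⟩⟩
  simp [EuclideanSpace.norm_single]

instance sphMeasure_openPos : (sphMeasure n).IsOpenPosMeasure := by
  refine ⟨fun U hU hne => ?_⟩
  rw [sphMeasure, Measure.toSphere_apply' volume hU.measurableSet]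
  refine mul_ne_zero ?_ ?_
  · simp only [finrank_euclideanSpace, Fintype.card_fin, ne_eq, Nat.cast_eq_zero]
    exact NeZero.ne n
  · obtain ⟨O, hO, hOU⟩ := isOpen_induced_iff.mp hU
    set B : Set (Euc n) := {x | 0 < ‖x‖ ∧ ‖x‖ < 1} with hB
    have hBopen : IsOpen B := by
      have : B = (fun x : Euc n => ‖x‖) ⁻¹' Set.Ioo 0 1 := rfl
      rw [this]
      exact isOpen_Ioo.preimage continuous_norm
    set W : Set (Euc n) := B ∩ (fun x : Euc n => ‖x‖⁻¹ • x) ⁻¹' O with hW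
    have hcont : ContinuousOn (fun x : Euc n => ‖x‖⁻¹ • x) B :=
      ((continuous_norm.continuousOn.inv₀ fun x hx => ne_of_gt hx.1).smul continuousOn_id)
    have hWopen : IsOpen W := hcont.isOpen_inter_preimage hBopen hO
    have hWV : Set.Ioo (0:ℝ) 1 • ((↑) '' U : Set (Euc n)) = W := by
      ext x
      constructor
      · intro hx
        rw [Set.mem_smul] at hx
        obtain ⟨r, hr, yy, hy, rfl⟩ := hx
        obtain ⟨u, huU, rfl⟩ := hy
        have hu1 : ‖(u : Euc n)‖ = 1 := mem_sphere_zero_iff_norm.mp u.2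
        have hnorm : ‖r • (u : Euc n)‖ = r := by
          rw [norm_smul, hu1, mul_one, Real.norm_eq_abs, abs_of_pos hr.1]
        refine ⟨⟨by rw [hnorm]; exact hr.1, by rw [hnorm]; exact hr.2⟩, ?_⟩
        show ‖r • (u : Euc n)‖⁻¹ • (r • (u : Euc n)) ∈ O
        rw [hnorm, smul_smul, inv_mul_cancel₀ (ne_of_gt hr.1), one_smul]
        have : u ∈ U := huU
        rw [← hOU] at this
        exact this
      · rintro ⟨⟨h0, h1⟩, hxO⟩
        have hx0 : x ≠ 0 := fun h => by simp [h] at h0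
        have hu1 : ‖(‖x‖⁻¹ • x : Euc n)‖ = 1 := by
          rw [norm_smul, norm_inv, norm_norm, inv_mul_cancel₀ (ne_of_gt h0)]
        set u : Sph n := ⟨‖x‖⁻¹ • x, mem_sphere_zero_iff_norm.mpr hu1⟩ with hu
        have huU : u ∈ U := by rw [← hOU]; exact hxO
        rw [Set.mem_smul]
        exact ⟨‖x‖, ⟨h0, h1⟩, ‖x‖⁻¹ • x, ⟨u, huU, rfl⟩,
          by rw [smul_smul, mul_inv_cancel₀ (ne_of_gt h0), one_smul]⟩
    rw [hWV]
    refine hWopen.measure_ne_zero _ ?_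
    obtain ⟨u, huU⟩ := hne
    have hu1 : ‖(u : Euc n)‖ = 1 := mem_sphere_zero_iff_norm.mp u.2
    refine ⟨(2:ℝ)⁻¹ • (u : Euc n), ?_, ?_⟩
    · constructor
      · rw [norm_smul, hu1, mul_one]; norm_num
      · rw [norm_smul, hu1, mul_one]; rw [Real.norm_eq_abs]; rw [abs_of_pos]; norm_num; norm_num
    · show ‖(2:ℝ)⁻¹ • (u : Euc n)‖⁻¹ • ((2:ℝ)⁻¹ • (u : Euc n)) ∈ O
      have : ‖(2:ℝ)⁻¹ • (u : Euc n)‖ = (2:ℝ)⁻¹ := by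
        rw [norm_smul, hu1, mul_one, Real.norm_eq_abs, abs_of_pos]; norm_num
      rw [this, smul_smul, inv_inv]
      norm_num
      rw [← hOU] at huU
      exact huU

instance : IsFiniteMeasure (sphMeasure n) := by
  rw [sphMeasure]; infer_instance

lemma integrable_cont (f : Sph n → ℝ) (hf : Continuous f) : Integrable f (sphMeasure n) := by
  have : HasCompactSupport f := HasCompactSupport.of_compactSpace f
  exact hf.integrable_of_hasCompactSupport this

lemma sph_integral_pos (f : Sph n → ℝ) (hf : Continuous f) (hpos : ∀ u, 0 < f u) :
    0 < ∫ u, f u ∂(sphMeasure n) := by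
  refine (integral_pos_iff_support_of_nonneg (fun u => (hpos u).le)
    (integrable_cont f hf)).2 ?_
  have hs : Function.support f = Set.univ := by
    ext u; simp [Function.mem_support, (hpos u).ne']
  rw [hs]
  exact isOpen_univ.measure_pos _ Set.univ_nonempty

end Helpers


section AMGM

lemma amgm_le (m : ℕ) (hm : 1 ≤ m) (y : Fin m → ℝ) (hy : ∀ j, 0 ≤ y j) :
    ∏ j, y j ≤ (∑ j, y j ^ m) / m := by
  have hm0 : (m : ℝ) ≠ 0 := Nat.cast_ne_zero.2 (by omega)
  have h := Real.geom_mean_le_arith_mean_weighted (s := Finset.univ) (fun _ => (m : ℝ)⁻¹)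
    (fun j => y j ^ m) (fun _ _ => by positivity)
    (by simp [Finset.sum_const, Finset.card_univ]; field_simp)
    (fun j _ => pow_nonneg (hy j) m)
  have hL : ∀ j : Fin m, (y j ^ m : ℝ) ^ ((m : ℝ)⁻¹) = y j := fun j =>
    Real.pow_rpow_inv_natCast (hy j) (by omega)
  calc ∏ j, y j = ∏ j, (y j ^ m : ℝ) ^ ((m : ℝ)⁻¹) :=
        (Finset.prod_congr rfl fun j _ => (hL j)).symm
    _ ≤ ∑ j, (m : ℝ)⁻¹ * y j ^ m := h
    _ = (∑ j, y j ^ m) / m := by rw [← Finset.mul_sum, inv_mul_eq_div]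

lemma amgm_lt (m : ℕ) (hm : 1 ≤ m) (y : Fin m → ℝ) (hy : ∀ j, 0 ≤ y j)
    (hne : ∃ j k, y j ≠ y k) : ∏ j, y j < (∑ j, y j ^ m) / m := by
  have hm0 : (m : ℝ) ≠ 0 := Nat.cast_ne_zero.2 (by omega)
  obtain ⟨j0, k0, hjk⟩ := hne
  by_cases hz : ∃ j, y j = 0
  · obtain ⟨j1, hj1⟩ := hz
    have hprod : ∏ j, y j = 0 := Finset.prod_eq_zero (Finset.mem_univ j1) hj1
    have hpos : ∃ j2 ∈ Finset.univ, 0 < (y j2) ^ m := by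
      rcases eq_or_ne (y j0) 0 with h0 | h0
      · exact ⟨k0, Finset.mem_univ _,
          pow_pos ((hy k0).lt_of_ne' (by rw [h0] at hjk; exact (Ne.symm hjk))) m⟩
      · exact ⟨j0, Finset.mem_univ _, pow_pos ((hy j0).lt_of_ne' h0) m⟩
    have hsum : 0 < ∑ j, y j ^ m := Finset.sum_pos' (fun j _ => pow_nonneg (hy j) m) hpos
    rw [hprod]
    positivity
  · push_neg at hz
    have hypos : ∀ j, 0 < y j := fun j => (hy j).lt_of_ne' (hz j)
    have h := strictConvexOn_exp.map_sum_lt (t := Finset.univ)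
      (w := fun _ : Fin m => (m : ℝ)⁻¹) (p := fun j => Real.log (y j ^ m))
      (fun _ _ => by positivity)
      (by simp [Finset.sum_const, Finset.card_univ]; field_simp)
      (fun _ _ => Set.mem_univ _)
      ⟨j0, Finset.mem_univ _, k0, Finset.mem_univ _, by
        intro hlog
        apply hjk
        have h2 := congrArg Real.exp hlog
        rw [Real.exp_log (pow_pos (hypos j0) m), Real.exp_log (pow_pos (hypos k0) m)] at h2
        exact (pow_left_strictMonoOn₀ (M₀ := ℝ) (by omega : m ≠ 0)).injOn
          (Set.mem_setOf.2 (hy j0)) (Set.mem_setOf.2 (hy k0)) h2⟩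
    have e2 : Real.exp (∑ j, (m : ℝ)⁻¹ • Real.log (y j ^ m)) = ∏ j, y j := by
      rw [Finset.sum_congr rfl (fun j _ => by
        rw [smul_eq_mul, Real.log_pow, ← mul_assoc, inv_mul_cancel₀ hm0, one_mul]),
        Real.exp_sum]
      exact Finset.prod_congr rfl fun j _ => Real.exp_log (hypos j)
    have e3 : ∑ j, (m : ℝ)⁻¹ • Real.exp (Real.log (y j ^ m)) = (∑ j, y j ^ m) / m := by
      rw [Finset.sum_congr rfl (fun j _ => by
        rw [smul_eq_mul, Real.exp_log (pow_pos (hypos j) m)]), ← Finset.mul_sum, inv_mul_eq_div]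
    rw [← e2, ← e3]
    exact h

lemma amgm_eq (m : ℕ) (hm : 1 ≤ m) (y : Fin m → ℝ) (hy : ∀ j, 0 ≤ y j)
    (h : ∏ j, y j = (∑ j, y j ^ m) / m) : ∀ j k, y j = y k := by
  intro j k
  by_contra hne
  exact (amgm_lt m hm y hy ⟨j, k, hne⟩).ne h

end AMGM

namespace DualAF
open Finset MeasureTheory

variable {n : ℕ} [NeZero n]

lemma key (m : ℕ) (hm : 1 ≤ m) (f : Fin m → Sph n → ℝ) (hfc : ∀ j, Continuous (f j))
    (hfp : ∀ j u, 0 < f j u) (g : Sph n → ℝ) (hgc : Continuous g) (hgp : ∀ u, 0 < g u) :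
    (∫ u, (∏ j, f j u) * g u ∂sphMeasure n) ^ m ≤
        (∏ j, ∫ u, f j u ^ m * g u ∂sphMeasure n) ∧
    ((∫ u, (∏ j, f j u) * g u ∂sphMeasure n) ^ m =
        (∏ j, ∫ u, f j u ^ m * g u ∂sphMeasure n) ↔
      ∀ j k, ∃ c : ℝ, 0 < c ∧ ∀ u, f j u = c * f k u) := by
  have hmne : m ≠ 0 := by omega
  have hm0 : (m : ℝ) ≠ 0 := Nat.cast_ne_zero.2 hmne
  have contP : Continuous fun u => (∏ j, f j u) * g u :=
    (continuous_finset_prod _ fun j _ => hfc j).mul hgc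
  have contA : ∀ j, Continuous fun u => f j u ^ m * g u := fun j => ((hfc j).pow m).mul hgc
  set a : Fin m → ℝ := fun j => ∫ u, f j u ^ m * g u ∂sphMeasure n with ha
  have haj : ∀ j, (∫ u, f j u ^ m * g u ∂sphMeasure n) = a j := fun j => rfl
  have hap : ∀ j, 0 < a j := fun j =>
    sph_integral_pos _ (contA j) (fun u => mul_pos (pow_pos (hfp j u) m) (hgp u))
  set c : Fin m → ℝ := fun j => a j ^ ((m : ℝ)⁻¹) with hc
  have hcp : ∀ j, 0 < c j := fun j => Real.rpow_pos_of_pos (hap j) _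
  have hcm : ∀ j, c j ^ m = a j := fun j => Real.rpow_inv_natCast_pow (hap j).le hmne
  have hPc : 0 < ∏ j, c j := Finset.prod_pos (fun j _ => hcp j)
  set I : ℝ := ∫ u, (∏ j, f j u) * g u ∂sphMeasure n with hI
  have hIdef : (∫ u, (∏ j, f j u) * g u ∂sphMeasure n) = I := rfl
  have hIp : 0 < I := sph_integral_pos _ contP
    (fun u => mul_pos (Finset.prod_pos fun j _ => hfp j u) (hgp u))
  set D : Sph n → ℝ :=
    fun u => ((∑ j, (f j u / c j) ^ m) / m - ∏ j, (f j u / c j)) * g u with hD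
  have hDc : Continuous D :=
    (((continuous_finset_sum _ fun j _ => ((hfc j).div_const _).pow m).div_const _).sub
      (continuous_finset_prod _ fun j _ => (hfc j).div_const _)).mul hgc
  have hD0 : ∀ u, 0 ≤ D u := fun u => mul_nonneg (sub_nonneg.2
    (amgm_le m hm _ (fun j => div_nonneg (hfp j u).le (hcp j).le))) (hgp u).le
  have hDeq : D = fun u =>
      (∑ j, f j u ^ m * g u / a j) / m - ((∏ j, f j u) * g u) / ∏ j, c j := by
    funext u
    show ((∑ j, (f j u / c j) ^ m) / m - ∏ j, (f j u / c j)) * g u = _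
    rw [sub_mul, div_mul_eq_mul_div, Finset.sum_mul, Finset.prod_div_distrib,
      div_mul_eq_mul_div]
    congr 2
    exact Finset.sum_congr rfl fun j _ => by rw [div_pow, hcm, div_mul_eq_mul_div]
  have hDint : ∫ u, D u ∂sphMeasure n = 1 - I / ∏ j, c j := by
    rw [hDeq]
    have int1 : ∀ j ∈ Finset.univ,
        Integrable (fun u => f j u ^ m * g u / a j) (sphMeasure n) := fun j _ =>
      integrable_cont _ ((contA j).div_const _)
    have int2 : Integrable (fun u => (∑ j, f j u ^ m * g u / a j) / m) (sphMeasure n) :=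
      integrable_cont _ ((continuous_finset_sum _ fun j _ => (contA j).div_const _).div_const _)
    have int3 : Integrable (fun u => ((∏ j, f j u) * g u) / ∏ j, c j) (sphMeasure n) :=
      integrable_cont _ (contP.div_const _)
    rw [integral_sub int2 int3, integral_div, integral_div,
      integral_finset_sum _ int1, hIdef]
    have e : ∀ j ∈ Finset.univ, (∫ u, f j u ^ m * g u / a j ∂sphMeasure n) = 1 := fun j _ => by
      rw [integral_div, haj j, div_self (hap j).ne']
    rw [Finset.sum_congr rfl e, Finset.sum_const, Finset.card_univ, Fintype.card_fin,
      nsmul_eq_mul, mul_one, div_self hm0]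
  have hIle : I ≤ ∏ j, c j := by
    have h0 := integral_nonneg (μ := sphMeasure n) (f := D) hD0
    rw [hDint] at h0
    have h2 : I / ∏ j, c j ≤ 1 := by linarith
    calc I = (I / ∏ j, c j) * ∏ j, c j := by field_simp
      _ ≤ 1 * ∏ j, c j := mul_le_mul_of_nonneg_right h2 hPc.le
      _ = ∏ j, c j := one_mul _
  have hprodac : ∏ j, a j = (∏ j, c j) ^ m := by
    rw [← Finset.prod_pow]
    exact Finset.prod_congr rfl fun j _ => (hcm j).symm
  have hmain : I ^ m ≤ ∏ j, a j := by
    rw [hprodac]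
    exact pow_le_pow_left₀ hIp.le hIle m
  refine ⟨hmain, ?_⟩
  have step1 : I ^ m = ∏ j, a j ↔ I = ∏ j, c j := by
    rw [hprodac]
    exact ⟨fun h => (pow_left_strictMonoOn₀ (M₀ := ℝ) hmne).injOn
      (Set.mem_setOf.2 hIp.le) (Set.mem_setOf.2 hPc.le) h, fun h => by rw [h]⟩
  have step2 : I = ∏ j, c j ↔ (∫ u, D u ∂sphMeasure n) = 0 := by
    rw [hDint, sub_eq_zero]
    exact ⟨fun h => by rw [h, div_self hPc.ne'],
      fun h => (div_eq_one_iff_eq hPc.ne').mp h.symm⟩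
  have step3 : (∫ u, D u ∂sphMeasure n) = 0 ↔ ∀ u, D u = 0 := by
    rw [integral_eq_zero_iff_of_nonneg (fun u => hD0 u) (integrable_cont _ hDc)]
    constructor
    · intro hae u
      exact congrFun ((Continuous.ae_eq_iff_eq (sphMeasure n) hDc
        (continuous_const : Continuous (fun _ : Sph n => (0:ℝ)))).mp hae) u
    · intro h
      exact Filter.Eventually.of_forall h
  have step4 : (∀ u, D u = 0) ↔ ∀ u (j k : Fin m), f j u / c j = f k u / c k := by
    constructor
    · intro h u j k
      have hu := h u
      have h2 : (∑ j, (f j u / c j) ^ m) / m - ∏ j, (f j u / c j) = 0 := by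
        rcases mul_eq_zero.mp hu with h' | h'
        · exact h'
        · exact absurd h' (hgp u).ne'
      by_contra hne
      have hlt := amgm_lt m hm (fun j => f j u / c j)
        (fun j => div_nonneg (hfp j u).le (hcp j).le) ⟨j, k, hne⟩
      rw [sub_eq_zero] at h2
      exact absurd h2.symm (ne_of_lt hlt)
    · intro h u
      have j0 : Fin m := ⟨0, hm⟩
      have hprod : (∏ j, f j u / c j) = (f j0 u / c j0) ^ m := by
        rw [Finset.prod_congr rfl fun j _ => h u j j0, Finset.prod_const, Finset.card_univ,
          Fintype.card_fin]
      have hsum : (∑ j, (f j u / c j) ^ m) = m * (f j0 u / c j0) ^ m := by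
        rw [Finset.sum_congr rfl fun j _ => by rw [h u j j0], Finset.sum_const,
          Finset.card_univ, Fintype.card_fin, nsmul_eq_mul]
      show ((∑ j, (f j u / c j) ^ m) / m - ∏ j, (f j u / c j)) * g u = 0
      have hcanc : ((m : ℝ) * (f j0 u / c j0) ^ m) / m = (f j0 u / c j0) ^ m :=
        mul_div_cancel_left₀ _ hm0
      rw [hsum, hprod, hcanc, sub_self, zero_mul]
  have step5 : (∀ u (j k : Fin m), f j u / c j = f k u / c k) ↔
      (∀ j k, ∃ d : ℝ, 0 < d ∧ ∀ u, f j u = d * f k u) := by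
    constructor
    · intro h j k
      refine ⟨c j / c k, div_pos (hcp j) (hcp k), fun u => ?_⟩
      have h2 := h u j k
      rw [div_eq_div_iff (hcp j).ne' (hcp k).ne'] at h2
      rw [div_mul_eq_mul_div, eq_div_iff (hcp k).ne']
      linarith [h2]
    · intro h u j k
      obtain ⟨d, hd, hdf⟩ := h j k
      have hajk : a j = d ^ m * a k := by
        rw [← haj j, ← haj k, ← integral_const_mul]
        congr 1
        funext v
        rw [hdf v, mul_pow, mul_assoc]
      have hcjk : c j = d * c k := by
        show a j ^ ((m : ℝ)⁻¹) = d * a k ^ ((m : ℝ)⁻¹)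
        rw [hajk, Real.mul_rpow (by positivity) (hap k).le,
          Real.pow_rpow_inv_natCast hd.le hmne]
      rw [hdf u, hcjk, mul_div_mul_left _ _ hd.ne']
  rw [step1, step2, step3, step4, step5]

end DualAF

namespace DualAF

lemma hsplit {n m : ℕ} (hmn : m ≤ n) (M : Fin n → StarBody n) (u : Sph n) :
    ∏ i, (M i).radial u =
      (∏ j : Fin m, (M (Fin.castLE hmn j)).radial u) *
        ∏ i ∈ Finset.univ.filter (fun i : Fin n => ¬ (i : ℕ) < m), (M i).radial u := by
  rw [← Finset.prod_filter_mul_prod_filter_not Finset.univ (fun i : Fin n => (i : ℕ) < m)]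
  congr 1
  exact Finset.prod_bij' (fun i hi => (⟨(i : ℕ), (Finset.mem_filter.mp hi).2⟩ : Fin m))
    (fun j _ => Fin.castLE hmn j)
    (fun i hi => Finset.mem_univ _)
    (fun j _ => Finset.mem_filter.mpr ⟨Finset.mem_univ _, j.isLt⟩)
    (fun i hi => rfl) (fun j hj => rfl) (fun i hi => rfl)

end DualAF


/-- Dual Aleksandrov–Fenchel inequality: for star bodies L_1,…,L_n and 1 ≤ m ≤ n,
Ṽ(L_1,…,L_n)^m ≤ ∏_{j=1}^m Ṽ(L_j,…,L_j,L_{m+1},…,L_n) (L_j appearing m times),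
with equality iff L_1,…,L_m are dilates of one another. -/
theorem stmt5 (n m : ℕ) (hn : 3 ≤ n) [NeZero n] (hm : 1 ≤ m) (hmn : m ≤ n)
    (L : Fin n → StarBody n) :
    dualMixedVol n L ^ m ≤
      ∏ j : Fin m, dualMixedVol n
        (fun i => if (i : ℕ) < m then L (Fin.castLE hmn j) else L i) ∧
    (dualMixedVol n L ^ m =
      ∏ j : Fin m, dualMixedVol n
        (fun i => if (i : ℕ) < m then L (Fin.castLE hmn j) else L i) ↔
      ∀ j k : Fin m, Dilates n (L (Fin.castLE hmn j)) (L (Fin.castLE hmn k))) := by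
  obtain ⟨hineq, hiff⟩ := DualAF.key (n := n) m hm
    (fun j u => (L (Fin.castLE hmn j)).radial u)
    (fun j => (L (Fin.castLE hmn j)).radial.continuous)
    (fun j u => (L (Fin.castLE hmn j)).pos u)
    (fun u => ∏ i ∈ Finset.univ.filter (fun i : Fin n => ¬ (i : ℕ) < m), (L i).radial u)
    (continuous_finset_prod _ fun i _ => (L i).radial.continuous)
    (fun u => Finset.prod_pos fun i _ => (L i).pos u)
  have hn0 : (0 : ℝ) < (1 / n : ℝ) ^ m := by
    have : (0 : ℝ) < (n : ℝ) := by exact_mod_cast Nat.pos_of_ne_zero (NeZero.ne n)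
    positivity
  have hLHS : dualMixedVol n L = (1 / n : ℝ) *
      ∫ u, (∏ j : Fin m, (L (Fin.castLE hmn j)).radial u) *
        (∏ i ∈ Finset.univ.filter (fun i : Fin n => ¬ (i : ℕ) < m), (L i).radial u)
        ∂(sphMeasure n) := by
    rw [dualMixedVol]
    congr 1
    exact congrArg _ (funext fun u => DualAF.hsplit hmn L u)
  have hRHS : ∀ j : Fin m,
      dualMixedVol n (fun i => if (i : ℕ) < m then L (Fin.castLE hmn j) else L i) =
      (1 / n : ℝ) * ∫ u, ((L (Fin.castLE hmn j)).radial u) ^ m *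
        (∏ i ∈ Finset.univ.filter (fun i : Fin n => ¬ (i : ℕ) < m), (L i).radial u)
        ∂(sphMeasure n) := by
    intro j
    rw [dualMixedVol]
    congr 1
    refine congrArg _ (funext fun u => ?_)
    rw [DualAF.hsplit hmn (fun i => if (i : ℕ) < m then L (Fin.castLE hmn j) else L i) u]
    congr 1
    · have e : ∀ j' : Fin m,
          ((if ((Fin.castLE hmn j' : Fin n) : ℕ) < m then L (Fin.castLE hmn j)
            else L (Fin.castLE hmn j')).radial) u = (L (Fin.castLE hmn j)).radial u :=
        fun j' => by simp only [Fin.coe_castLE, j'.isLt, if_true]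
      rw [Finset.prod_congr rfl fun j' _ => e j', Finset.prod_const, Finset.card_univ,
        Fintype.card_fin]
    · exact Finset.prod_congr rfl fun i hi => by
        rw [if_neg (Finset.mem_filter.mp hi).2]
  rw [hLHS, Finset.prod_congr rfl (fun j _ => hRHS j), mul_pow, Finset.prod_mul_distrib,
    Finset.prod_const, Finset.card_univ, Fintype.card_fin]
  constructor
  · exact mul_le_mul_of_nonneg_left hineq hn0.le
  · rw [mul_right_inj' hn0.ne']
    exact hiff
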